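/- Let X be a Banach function space over (0,∞) and f ∈ X̃ + L^∞, where X̃ = {f : f̃ ∈ X} with norm ‖f‖_{X̃} = ‖f̃‖_X and f̃(t) = ess sup_{s≥t}|f(s)|. Then for every t > 0, K(t, f; X̃, L^∞) = K(t, f̃; X, L^∞), where K is the Peetre K-functional. -/

import Mathlib

open MeasureTheory ENNReal

/-- The nonincreasing majorant `f̃(t) = ess sup_{s ≥ t} |f(s)|`. -/
noncomputable def majorant (f : ℝ → ℝ) (t : ℝ) : ℝ :=
  essSup (fun s => |f s|) (MeasureTheory.volume.restrict (Set.Ici t))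

/-- An abstract Banach function norm over `(0,∞)` (with values in `ℝ≥0∞`):
a lattice monotone, subadditive, absolutely homogeneous functional. -/
structure BanachFunctionNorm where
  N : (ℝ → ℝ) → ℝ≥0∞
  mono : ∀ f g : ℝ → ℝ,
    (∀ᵐ t ∂(MeasureTheory.volume.restrict (Set.Ioi (0 : ℝ))), |g t| ≤ |f t|) → N g ≤ N f
  add_le : ∀ f g : ℝ → ℝ, N (f + g) ≤ N f + N g
  smul_eq : ∀ (c : ℝ) (f : ℝ → ℝ), N (c • f) = ENNReal.ofReal |c| * N f

/-- The Peetre K-functional for a couple of function norms. -/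
noncomputable def Kfun (t : ℝ) (f : ℝ → ℝ) (N₀ N₁ : (ℝ → ℝ) → ℝ≥0∞) : ℝ≥0∞ :=
  ⨅ (g : (ℝ → ℝ) × (ℝ → ℝ)) (_ : f = g.1 + g.2), N₀ g.1 + ENNReal.ofReal t * N₁ g.2

/-- The `L^∞` norm over `(0,∞)`. -/
noncomputable def LinfNorm (f : ℝ → ℝ) : ℝ≥0∞ :=
  essSup (fun t => ENNReal.ofReal |f t|) (MeasureTheory.volume.restrict (Set.Ioi (0 : ℝ)))

namespace KAux

/-- The set of a.e. upper bounds of `|φ|` on `[t, ∞)`. -/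
def S (φ : ℝ → ℝ) (t : ℝ) : Set ℝ :=
  {a | ∀ᵐ s ∂(MeasureTheory.volume.restrict (Set.Ici t)), |φ s| ≤ a}

lemma neBot (t : ℝ) : (MeasureTheory.ae (volume.restrict (Set.Ici t))).NeBot := by
  rw [ae_neBot]
  intro h
  have h1 : (volume.restrict (Set.Ici t)) Set.univ = 0 := by rw [h]; simp
  rw [Measure.restrict_apply_univ] at h1
  simp [Real.volume_Ici] at h1

lemma S_def {φ : ℝ → ℝ} {t b : ℝ} (hb : b ∈ S φ t) :
    ∀ᵐ s ∂(MeasureTheory.volume.restrict (Set.Ici t)), |φ s| ≤ b := hb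

lemma S_mk {φ : ℝ → ℝ} {t b : ℝ}
    (hb : ∀ᵐ s ∂(MeasureTheory.volume.restrict (Set.Ici t)), |φ s| ≤ b) : b ∈ S φ t := hb

lemma S_nonneg {φ : ℝ → ℝ} {t b : ℝ} (hb : b ∈ S φ t) : 0 ≤ b := by
  haveI := neBot t
  obtain ⟨s, hs⟩ := (S_def hb).exists
  exact le_trans (abs_nonneg _) hs

lemma S_bdd (φ : ℝ → ℝ) (t : ℝ) : BddBelow (S φ t) :=
  ⟨0, fun _ hb => S_nonneg hb⟩

lemma maj_eq (φ : ℝ → ℝ) (t : ℝ) : majorant φ t = sInf (S φ t) := rfl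

lemma maj_nonneg (φ : ℝ → ℝ) (t : ℝ) : 0 ≤ majorant φ t := by
  rw [maj_eq]; exact Real.sInf_nonneg fun _ hb => S_nonneg hb

lemma maj_le {φ : ℝ → ℝ} {t b : ℝ} (hb : b ∈ S φ t) : majorant φ t ≤ b := by
  rw [maj_eq]; exact csInf_le (S_bdd φ t) hb

lemma le_maj {φ : ℝ → ℝ} {t c : ℝ} (hne : (S φ t).Nonempty)
    (hc : ∀ b ∈ S φ t, c ≤ b) : c ≤ majorant φ t := by
  rw [maj_eq]; exact le_csInf hne hc

lemma maj_empty {φ : ℝ → ℝ} {t : ℝ} (h : ¬(S φ t).Nonempty) : majorant φ t = 0 := by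
  rw [maj_eq, Set.not_nonempty_iff_eq_empty.mp h, Real.sInf_empty]

/-- The majorant is itself an a.e. bound (when a bound exists at all). -/
lemma maj_mem {φ : ℝ → ℝ} {t : ℝ} (h : (S φ t).Nonempty) : majorant φ t ∈ S φ t := by
  rw [maj_eq]
  have key : ∀ n : ℕ, ∀ᵐ s ∂(volume.restrict (Set.Ici t)),
      |φ s| ≤ sInf (S φ t) + 1 / (n + 1) := by
    intro n
    have hlt : sInf (S φ t) < sInf (S φ t) + 1 / (n + 1 : ℝ) := by
      have : (0:ℝ) < 1 / (n + 1 : ℝ) := by positivity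
      linarith
    obtain ⟨b, hbS, hb⟩ := exists_lt_of_csInf_lt h hlt
    exact (S_def hbS).mono fun s hs => hs.trans hb.le
  have := (ae_all_iff).mpr key
  refine this.mono fun s hs => ?_
  by_contra hcon
  push_neg at hcon
  obtain ⟨n, hn⟩ := exists_nat_one_div_lt (sub_pos.mpr hcon)
  have := hs n
  linarith

/-- Essential sup of `(|φ| - a)₊` equals `(majorant φ - a)₊`, junk cases included. -/
lemma maj_shift {φ ψ : ℝ → ℝ} {a : ℝ} (ha : 0 ≤ a)
    (hψ : ∀ s, |ψ s| = max (|φ s| - a) 0) (t : ℝ) :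
    majorant ψ t = max (majorant φ t - a) 0 := by
  by_cases h : (S φ t).Nonempty
  · have hm := maj_mem h
    have h1 : max (majorant φ t - a) 0 ∈ S ψ t :=
      S_mk <| (S_def hm).mono fun s hs => by
        rw [hψ s]; exact max_le_max (by linarith) le_rfl
    refine le_antisymm (maj_le h1) (le_maj ⟨_, h1⟩ fun b hb => ?_)
    have hb0 : 0 ≤ b := S_nonneg hb
    have hab : a + b ∈ S φ t := S_mk <| (S_def hb).mono fun s hs => by
      have h2 : |φ s| - a ≤ max (|φ s| - a) 0 := le_max_left _ _
      rw [← hψ s] at h2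
      linarith
    have hle := maj_le hab
    exact max_le (by linarith) hb0
  · have h2 : ¬(S ψ t).Nonempty := by
      rintro ⟨b, hb⟩
      refine h ⟨a + b, S_mk <| (S_def hb).mono fun s hs => ?_⟩
      have h2 : |φ s| - a ≤ max (|φ s| - a) 0 := le_max_left _ _
      rw [← hψ s] at h2
      linarith
    rw [maj_empty h, maj_empty h2]
    rw [max_eq_right (by linarith)]

/-- If `f = g + h` with `|h| ≤ a` a.e. on `[s,∞)`, then `(f̃ s - a)₊ ≤ g̃ s`. -/
lemma maj_decomp_le {g h : ℝ → ℝ} {a : ℝ} (ha : 0 ≤ a) {s : ℝ}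
    (hh : ∀ᵐ x ∂(volume.restrict (Set.Ici s)), |h x| ≤ a) :
    max (majorant (g + h) s - a) 0 ≤ majorant g s := by
  by_cases hg : (S g s).Nonempty
  · have hm := maj_mem hg
    have h1 : majorant g s + a ∈ S (g + h) s := by
      refine S_mk ?_
      filter_upwards [S_def hm, hh] with x h1 h2
      calc |(g + h) x| = |g x + h x| := rfl
        _ ≤ |g x| + |h x| := abs_add_le _ _
        _ ≤ majorant g s + a := add_le_add h1 h2
    have hle := maj_le h1
    exact max_le (by linarith) (maj_nonneg _ _)
  · have h2 : ¬(S (g + h) s).Nonempty := by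
      rintro ⟨b, hb⟩
      refine hg ⟨b + a, S_mk ?_⟩
      filter_upwards [S_def hb, hh] with x h1 h2
      have h3 : |g x| ≤ |g x + h x| + |h x| := by
        calc |g x| = |(g x + h x) - h x| := by ring_nf
          _ ≤ |g x + h x| + |h x| := abs_sub _ _
      have h4 : |g x + h x| ≤ b := h1
      linarith
    rw [maj_empty h2]
    rw [max_eq_right (by linarith)]
    exact maj_nonneg _ _

/-- Truncation at level `a`. -/
noncomputable def trunc (a : ℝ) (φ : ℝ → ℝ) (s : ℝ) : ℝ := max (-a) (min a (φ s))

lemma abs_trunc_le {a : ℝ} (ha : 0 ≤ a) (φ : ℝ → ℝ) (s : ℝ) : |trunc a φ s| ≤ a := by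
  unfold trunc
  rw [abs_le]
  constructor
  · exact le_max_left _ _
  · exact max_le (by linarith) (min_le_left _ _)

lemma abs_sub_trunc {a : ℝ} (ha : 0 ≤ a) (φ : ℝ → ℝ) (s : ℝ) :
    |φ s - trunc a φ s| = max (|φ s| - a) 0 := by
  unfold trunc
  rcases le_total a (φ s) with h1 | h1
  · rw [min_eq_left h1, max_eq_right (by linarith), abs_of_nonneg (by linarith),
      abs_of_nonneg (by linarith), max_eq_left (by linarith)]
  · rcases le_total (φ s) (-a) with h2 | h2
    · rw [min_eq_right (by linarith), max_eq_left h2, abs_of_nonpos (by linarith),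
        abs_of_nonpos (by linarith), max_eq_left (by linarith)]
      ring
    · rw [min_eq_right (by linarith), max_eq_right h2, sub_self, abs_zero,
        max_eq_right (by rcases abs_cases (φ s) with ⟨h3, _⟩ | ⟨h3, _⟩ <;> linarith)]

lemma linf_le {φ : ℝ → ℝ} {a : ℝ} (ha : 0 ≤ a)
    (h : ∀ᵐ s ∂(volume.restrict (Set.Ioi (0 : ℝ))), |φ s| ≤ a) :
    LinfNorm φ ≤ ENNReal.ofReal a := by
  refine essSup_le_of_ae_le _ (h.mono fun s hs => ?_)
  exact ENNReal.ofReal_le_ofReal hs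

lemma linf_bound {φ : ℝ → ℝ} (h : LinfNorm φ ≠ ⊤) :
    ∀ᵐ s ∂(volume.restrict (Set.Ioi (0 : ℝ))), |φ s| ≤ (LinfNorm φ).toReal := by
  have hle := _root_.ae_le_essSup (μ := volume.restrict (Set.Ioi (0 : ℝ)))
    (f := fun s => ENNReal.ofReal |φ s|)
  refine hle.mono fun s hs => ?_
  calc |φ s| = (ENNReal.ofReal |φ s|).toReal := (ENNReal.toReal_ofReal (abs_nonneg _)).symm
    _ ≤ (LinfNorm φ).toReal := ENNReal.toReal_mono h hs

end KAux

open KAux in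
/-- for `f ∈ X̃ + L^∞`, `K(t, f; X̃, L^∞) = K(t, f̃; X, L^∞)`, where
`‖g‖_{X̃} = ‖g̃‖_X`. -/
theorem K_tilde_eq (X : BanachFunctionNorm) (f : ℝ → ℝ)
    (hf : ∃ g h : ℝ → ℝ, f = g + h ∧ X.N (majorant g) < ⊤ ∧ LinfNorm h < ⊤) :
    ∀ t : ℝ, 0 < t →
      Kfun t f (fun g => X.N (majorant g)) LinfNorm = Kfun t (majorant f) X.N LinfNorm := by
  intro t ht
  have ht' : ENNReal.ofReal t ≠ 0 := by
    simp only [ne_eq, ENNReal.ofReal_eq_zero, not_le]; exact ht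
  apply le_antisymm
  · -- LHS ≤ RHS
    refine le_iInf fun uv => le_iInf fun huv => ?_
    by_cases hv : LinfNorm uv.2 = ⊤
    · rw [hv, ENNReal.mul_top ht', add_top]
      exact le_top
    · set a := (LinfNorm uv.2).toReal with ha_def
      have ha : 0 ≤ a := ENNReal.toReal_nonneg
      have hdecomp : f = (fun s => f s - trunc a f s) + (trunc a f) := by
        funext s; simp
      have step1 : Kfun t f (fun g => X.N (majorant g)) LinfNorm
          ≤ X.N (majorant (fun s => f s - trunc a f s))
            + ENNReal.ofReal t * LinfNorm (trunc a f) :=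
        iInf_le_of_le ((fun s => f s - trunc a f s), trunc a f) (iInf_le _ hdecomp)
      refine step1.trans (add_le_add ?_ ?_)
      · have e1 : majorant (fun s => f s - trunc a f s)
            = fun s => max (majorant f s - a) 0 := by
          funext s
          exact maj_shift ha (fun s' => abs_sub_trunc ha f s') s
        rw [e1]
        apply X.mono
        have hv' := linf_bound hv
        filter_upwards [hv'] with s hsv
        rw [abs_of_nonneg (le_max_right _ _)]
        have h0 : majorant f s = uv.1 s + uv.2 s := by rw [huv]; rfl
        have h1 : uv.2 s ≤ |uv.2 s| := le_abs_self _
        have h2 : uv.1 s ≤ |uv.1 s| := le_abs_self _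
        exact max_le (by linarith) (abs_nonneg _)
      · have hle : LinfNorm (trunc a f) ≤ ENNReal.ofReal a :=
          linf_le ha (Filter.Eventually.of_forall fun s => abs_trunc_le ha f s)
        rw [ha_def, ENNReal.ofReal_toReal hv] at hle
        exact mul_le_mul_right hle _
  · -- RHS ≤ LHS
    refine le_iInf fun gh => le_iInf fun hgh => ?_
    by_cases hh : LinfNorm gh.2 = ⊤
    · rw [hh, ENNReal.mul_top ht', add_top]
      exact le_top
    · set a := (LinfNorm gh.2).toReal with ha_def
      have ha : 0 ≤ a := ENNReal.toReal_nonneg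
      have hdecomp : majorant f
          = (fun s => max (majorant f s - a) 0) + (fun s => min (majorant f s) a) := by
        funext s
        simp only [Pi.add_apply]
        rcases le_total (majorant f s) a with h | h
        · rw [max_eq_right (by linarith), min_eq_left h]; ring
        · rw [max_eq_left (by linarith), min_eq_right h]; ring
      have step1 : Kfun t (majorant f) X.N LinfNorm
          ≤ X.N (fun s => max (majorant f s - a) 0)
            + ENNReal.ofReal t * LinfNorm (fun s => min (majorant f s) a) :=
        iInf_le_of_le ((fun s => max (majorant f s - a) 0), fun s => min (majorant f s) a)
          (iInf_le _ hdecomp)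
      refine step1.trans (add_le_add ?_ ?_)
      · apply X.mono
        have hb := linf_bound hh
        rw [show f = gh.1 + gh.2 from hgh]
        refine (ae_restrict_iff' measurableSet_Ioi).mpr (Filter.Eventually.of_forall fun s hs => ?_)
        have hha : ∀ᵐ x ∂(volume.restrict (Set.Ici s)), |gh.2 x| ≤ a :=
          hb.filter_mono (ae_mono (Measure.restrict_mono (Set.Ici_subset_Ioi.mpr hs) le_rfl))
        have hkey := maj_decomp_le (g := gh.1) ha hha
        rw [abs_of_nonneg (le_max_right _ _), abs_of_nonneg (maj_nonneg _ _)]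
        exact hkey
      · have hle : LinfNorm (fun s => min (majorant f s) a) ≤ ENNReal.ofReal a := by
          refine linf_le ha (Filter.Eventually.of_forall fun s => ?_)
          rw [abs_le]
          constructor
          · have := maj_nonneg f s
            have h2 : 0 ≤ min (majorant f s) a := le_min this ha
            linarith
          · exact min_le_right _ _
        rw [ha_def, ENNReal.ofReal_toReal hh] at hle
        exact mul_le_mul_right hle _
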